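/- For every N ≥ 0, no optimal palindromic decomposition of the prefix of the Thue-Morse word of length 4N + 1 ends with a palindrome of length 3: if the prefix of t of length 4N+1 equals a concatenation p_1⋯p_k of nonempty palindromes with k = PPL_t(4N+1), then the length of p_k is not 3. -/

import Mathlib

/-- The Thue–Morse word: `tm n` is the number of ones (sum of binary digits)
in the binary expansion of `n`, taken mod 2. -/
def tm (n : ℕ) : ℕ := (Nat.digits 2 n).sum % 2

/-- `ps` is a factorization of the finite word `w` into nonempty palindromes. -/
def IsPalDecomp (w : List ℕ) (ps : List (List ℕ)) : Prop :=
  ps.flatten = w ∧ ∀ p ∈ ps, p ≠ [] ∧ p.Palindrome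

/-- The palindromic length of a finite word: the least number of nonempty
palindromes whose concatenation is the word (0 for the empty word). -/
noncomputable def palLen (w : List ℕ) : ℕ :=
  sInf {k | ∃ ps, ps.length = k ∧ IsPalDecomp w ps}

/-- `pplTM n` is the palindromic length of the prefix of length `n`
of the Thue–Morse word. -/
noncomputable def pplTM (n : ℕ) : ℕ := palLen ((List.range n).map tm)

set_option linter.unreachableTactic false
set_option linter.unusedTactic false
set_option linter.unnecessarySeqFocus false


lemma tm_le_one (n : ℕ) : tm n ≤ 1 := Nat.lt_succ_iff.mp (Nat.mod_lt _ (by norm_num))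

lemma tm_two_mul (n : ℕ) : tm (2 * n) = tm n := by
  rcases Nat.eq_zero_or_pos n with h | h
  · simp [h]
  · unfold tm
    rw [Nat.digits_def' (by norm_num : 1 < 2) (by omega)]
    simp [Nat.mul_div_cancel_left _ (by norm_num : 0 < 2), Nat.mul_mod_right]

lemma tm_two_mul_add_one (n : ℕ) : tm (2 * n + 1) = 1 - tm n := by
  unfold tm
  rw [Nat.digits_def' (by norm_num : 1 < 2) (by omega)]
  have h1 : (2 * n + 1) % 2 = 1 := by omega
  have h2 : (2 * n + 1) / 2 = n := by omega
  rw [h1, h2]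
  simp only [List.sum_cons]
  have := Nat.mod_lt ((Nat.digits 2 n).sum) (show 0 < 2 by norm_num)
  omega

lemma tm4_0 (a : ℕ) : tm (4 * a) = tm a := by
  have : 4 * a = 2 * (2 * a) := by ring
  rw [this, tm_two_mul, tm_two_mul]

lemma tm4_1 (a : ℕ) : tm (4 * a + 1) = 1 - tm a := by
  have : 4 * a + 1 = 2 * (2 * a) + 1 := by ring
  rw [this, tm_two_mul_add_one, tm_two_mul]

lemma tm4_2 (a : ℕ) : tm (4 * a + 2) = 1 - tm a := by
  have : 4 * a + 2 = 2 * (2 * a + 1) := by ring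
  rw [this, tm_two_mul, tm_two_mul_add_one]

lemma tm4_3 (a : ℕ) : tm (4 * a + 3) = tm a := by
  have : 4 * a + 3 = 2 * (2 * a + 1) + 1 := by ring
  rw [this, tm_two_mul_add_one, tm_two_mul_add_one]
  have := tm_le_one a
  omega

/-- adjacent equal letters occur only at odd positions -/
lemma tm_adj {c : ℕ} (h : tm c = tm (c + 1)) : c % 2 = 1 := by
  by_contra hc
  have hc2 : c % 2 = 0 := by omega
  obtain ⟨d, rfl⟩ : ∃ d, c = 2 * d := ⟨c / 2, by omega⟩
  rw [tm_two_mul, tm_two_mul_add_one] at h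
  have := tm_le_one d
  omega

/-- no palindromic "radius-2 symmetry": `t(d+1)=t(d+3)` and `t(d)=t(d+4)` is impossible -/
lemma tm_no_center (d : ℕ) (h1 : tm (d + 1) = tm (d + 3)) (h2 : tm d = tm (d + 4)) : False := by
  rcases Nat.even_or_odd d with ⟨e, rfl⟩ | ⟨e, rfl⟩
  · -- d = 2e
    have a1 : tm (2 * e + 1) = 1 - tm e := tm_two_mul_add_one e
    have a2 : tm (2 * e + 3) = 1 - tm (e + 1) := by
      have : 2 * e + 3 = 2 * (e + 1) + 1 := by ring
      rw [this, tm_two_mul_add_one]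
    have a3 : tm (2 * e) = tm e := tm_two_mul e
    have a4 : tm (2 * e + 4) = tm (e + 2) := by
      have : 2 * e + 4 = 2 * (e + 2) := by ring
      rw [this, tm_two_mul]
    rw [show e + e + 1 = 2 * e + 1 by ring, show e + e + 3 = 2 * e + 3 by ring] at h1
    rw [show e + e = 2 * e by ring] at h2
    have he1 : tm e = tm (e + 1) := by
      rw [a1, a2] at h1
      have := tm_le_one e; have := tm_le_one (e+1); omega
    have he2 : tm (e + 1) = tm (e + 2) := by
      rw [a3, a4] at h2
      have := tm_le_one e; have := tm_le_one (e+2); omega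
    have o1 := tm_adj he1
    have o2 := tm_adj (by simpa using he2)
    omega
  · -- d = 2e+1
    have a1 : tm (2 * e + 1 + 1) = tm (e + 1) := by
      have : 2 * e + 1 + 1 = 2 * (e + 1) := by ring
      rw [this, tm_two_mul]
    have a2 : tm (2 * e + 1 + 3) = tm (e + 2) := by
      have : 2 * e + 1 + 3 = 2 * (e + 2) := by ring
      rw [this, tm_two_mul]
    have a3 : tm (2 * e + 1) = 1 - tm e := tm_two_mul_add_one e
    have a4 : tm (2 * e + 1 + 4) = 1 - tm (e + 2) := by
      have : 2 * e + 1 + 4 = 2 * (e + 2) + 1 := by ring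
      rw [this, tm_two_mul_add_one]
    have he2 : tm (e + 1) = tm (e + 2) := by rw [← a1, ← a2]; exact h1
    have he1 : tm e = tm (e + 1) := by
      rw [a3, a4] at h2
      have := tm_le_one e; have := tm_le_one (e+2); omega
    have o1 := tm_adj he1
    have o2 := tm_adj (by simpa using he2)
    omega


def W (n : ℕ) : List ℕ := (List.range n).map tm
def seg (a b : ℕ) : List ℕ := (List.range' a (b - a)).map tm

lemma pplTM_def (n : ℕ) : pplTM n = palLen (W n) := rfl

@[simp] lemma W_length (n : ℕ) : (W n).length = n := by simp [W]
@[simp] lemma seg_length (a b : ℕ) : (seg a b).length = b - a := by simp [seg]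

lemma seg_getElem {a b i : ℕ} (h : i < b - a) :
    (seg a b)[i]'(by simpa using h) = tm (a + i) := by
  simp [seg]

lemma W_append {a b : ℕ} (hab : a ≤ b) : W b = W a ++ seg a b := by
  unfold W seg
  rw [List.range_eq_range', List.range_eq_range', ← List.map_append]
  congr 1
  have h : List.range' 0 a ++ List.range' (0 + 1 * a) (b - a) 1 = List.range' 0 (a + (b - a)) 1 :=
    List.range'_append
  simp only [one_mul, zero_add] at h
  rw [h]
  congr 1
  omega

lemma pal_of_ptwise {a b : ℕ} (h : ∀ i, a + i < b → tm (a + i) = tm (b - 1 - i)) :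
    (seg a b).Palindrome := by
  apply List.Palindrome.of_reverse_eq
  apply List.ext_getElem (by simp)
  intro i h1 h2
  rw [List.getElem_reverse]
  simp only [seg_length] at h1 h2 ⊢
  rw [seg_getElem (by omega), seg_getElem (by omega)]
  have e1 : a + (b - a - 1 - i) = b - 1 - i := by omega
  rw [e1]
  exact (h i (by omega)).symm

lemma ptwise_of_pal {a b : ℕ} (hp : (seg a b).Palindrome) :
    ∀ i, a + i < b → tm (a + i) = tm (b - 1 - i) := by
  intro i hi
  have hr := hp.reverse_eq
  have h1 : i < (seg a b).length := by simp; omega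
  have h2 : i < (seg a b).reverse.length := by simpa using h1
  have key : (seg a b)[i]'h1 = (seg a b)[(seg a b).length - 1 - i]'(by simp at h1 ⊢; omega) := by
    calc (seg a b)[i]'h1 = (seg a b).reverse[i]'h2 := (List.getElem_of_eq hr h2).symm
    _ = (seg a b)[(seg a b).length - 1 - i]'_ := List.getElem_reverse h2
  have e1 : (seg a b)[i]'h1 = tm (a + i) := seg_getElem (by simpa using h1)
  have e2 : (seg a b)[(seg a b).length - 1 - i]'(by simp at h1 ⊢; omega) = tm (b - 1 - i) := by
    simp only [seg_length]
    rw [seg_getElem (by simp at h1; omega)]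
    congr 1
    simp at h1
    omega
  rw [← e1, ← e2]
  exact key

lemma exists_decomp (w : List ℕ) : IsPalDecomp w (w.map fun a => [a]) := by
  constructor
  · induction w with
    | nil => simp
    | cons x xs ih => simp [ih]
  · intro p hp
    simp only [List.mem_map] at hp
    obtain ⟨x, -, rfl⟩ := hp
    exact ⟨by simp, List.Palindrome.singleton x⟩

lemma palLen_le {w : List ℕ} {ps : List (List ℕ)} (h : IsPalDecomp w ps) :
    palLen w ≤ ps.length := Nat.sInf_le ⟨ps, rfl, h⟩

lemma palLen_spec (w : List ℕ) : ∃ ps, IsPalDecomp w ps ∧ ps.length = palLen w := by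
  have hne : {k | ∃ ps, ps.length = k ∧ IsPalDecomp w ps}.Nonempty :=
    ⟨_, _, rfl, exists_decomp w⟩
  obtain ⟨ps, h1, h2⟩ := Nat.sInf_mem hne
  exact ⟨ps, h2, h1⟩

lemma pplTM_zero : pplTM 0 = 0 := by
  have : IsPalDecomp (W 0) [] := ⟨by simp [W], by simp⟩
  have h2 := palLen_le this
  simpa [pplTM_def] using h2

lemma seg_singleton (n : ℕ) : seg n (n + 1) = [tm n] := by
  simp [seg, List.range']

lemma pplTM_append_pal {a b : ℕ} (hab : a ≤ b) (hp : (seg a b).Palindrome) :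
    pplTM b ≤ pplTM a + 1 := by
  rcases eq_or_lt_of_le hab with rfl | h
  · exact Nat.le_succ_of_le le_rfl
  · obtain ⟨ps, hd, hl⟩ := palLen_spec (W a)
    have hdec : IsPalDecomp (W b) (ps ++ [seg a b]) := by
      constructor
      · rw [List.flatten_append, hd.1, W_append hab]
        simp
      · intro p hmem
        rcases List.mem_append.mp hmem with h1 | h1
        · exact hd.2 p h1
        · simp only [List.mem_singleton] at h1
          subst h1
          refine ⟨?_, hp⟩
          have : (seg a b).length = b - a := seg_length a b
          intro hnil
          rw [hnil] at this
          simp at this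
          omega
    have := palLen_le hdec
    simp only [List.length_append, List.length_singleton] at this
    rw [pplTM_def, pplTM_def, ← hl]
    exact this

lemma pplTM_succ_le (n : ℕ) : pplTM (n + 1) ≤ pplTM n + 1 := by
  apply pplTM_append_pal (Nat.le_succ n)
  rw [seg_singleton]
  exact List.Palindrome.singleton _

lemma pplTM_le_succ (n : ℕ) : pplTM n ≤ pplTM (n + 1) + 1 := by
  obtain ⟨ps, hd, hl⟩ := palLen_spec (W (n + 1))
  have hW : W (n + 1) = W n ++ [tm n] := by
    rw [W_append (Nat.le_succ n), seg_singleton]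
  rcases List.eq_nil_or_concat ps with rfl | ⟨qs, p, rfl⟩
  · exfalso
    have := hd.1
    simp at this
    have := congrArg List.length this
    rw [W_length] at this
    simp at this
  · have hflat : qs.flatten ++ p = W n ++ [tm n] := by
      have := hd.1
      rw [List.concat_eq_append, List.flatten_append] at this
      simpa [hW] using this
    have hqs : ∀ q ∈ qs, q ≠ [] ∧ q.Palindrome := by
      intro q hq
      exact hd.2 q (by rw [List.concat_eq_append]; exact List.mem_append_left _ hq)
    have hpmem := hd.2 p (by rw [List.concat_eq_append]; exact List.mem_append_right _ (by simp))
    have hl' : qs.length + 1 = pplTM (n + 1) := by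
      rw [pplTM_def, ← hl, List.concat_eq_append]; simp
    cases hpmem.2 with
    | nil => exact absurd rfl hpmem.1
    | singleton x =>
      have heq := List.append_inj hflat (by
        have := congrArg List.length hflat
        simp [W_length] at this ⊢
        omega)
      have : palLen (W n) ≤ qs.length := palLen_le ⟨heq.1, hqs⟩
      rw [pplTM_def]
      omega
    | cons_concat x hs =>
      rename_i s
      have hre : (qs.flatten ++ (x :: s)) ++ [x] = W n ++ [tm n] := by
        rw [← hflat]
        simp
      have heq := List.append_inj hre (by
          have h9 := congrArg List.length hre
          simp only [List.length_append, W_length, List.length_singleton, List.length_cons] at h9 ⊢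
          omega)
      have hWn : W n = qs.flatten ++ (x :: s) := heq.1.symm
      rcases List.eq_nil_or_concat s with rfl | hsne
      · have : palLen (W n) ≤ (qs ++ [[x]]).length := palLen_le (by
          constructor
          · rw [List.flatten_append, hWn]; simp
          · intro q hq
            rcases List.mem_append.mp hq with h1 | h1
            · exact hqs q h1
            · simp only [List.mem_singleton] at h1; subst h1
              exact ⟨by simp, List.Palindrome.singleton x⟩)
        simp at this
        rw [pplTM_def]
        omega
      · have hsne' : s ≠ [] := by rcases hsne with ⟨l, b, rfl⟩; simp
        have : palLen (W n) ≤ (qs ++ [[x], s]).length := palLen_le (by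
          constructor
          · rw [List.flatten_append, hWn]; simp
          · intro q hq
            rcases List.mem_append.mp hq with h1 | h1
            · exact hqs q h1
            · simp only [List.mem_cons, List.mem_singleton] at h1
              rcases h1 with rfl | rfl | h1
              · exact ⟨by simp, List.Palindrome.singleton x⟩
              · exact ⟨hsne', hs⟩
              · simp at h1)
        simp at this
        rw [pplTM_def]
        omega

def B (x : ℕ) : List ℕ := [x, 1 - x, 1 - x, x]
def Phi (l : List ℕ) : List ℕ := l.flatMap B

lemma B_reverse (x : ℕ) : (B x).reverse = B x := by simp [B]

lemma Phi_palindrome {l : List ℕ} (h : l.Palindrome) : (Phi l).Palindrome := by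
  apply List.Palindrome.of_reverse_eq
  unfold Phi
  rw [List.reverse_flatMap, h.reverse_eq]
  simp only [Function.comp_def, B_reverse]

lemma Phi_flatten (ps : List (List ℕ)) : (ps.map Phi).flatten = Phi ps.flatten := by
  induction ps with
  | nil => simp [Phi]
  | cons q qs ih => simp [Phi, List.flatMap_append] at ih ⊢; rw [ih]

lemma Phi_ne_nil {p : List ℕ} (h : p ≠ []) : Phi p ≠ [] := by
  cases p with
  | nil => exact absurd rfl h
  | cons x xs => simp [Phi, B]

lemma seg_four (n : ℕ) : seg (4 * n) (4 * n + 4) = B (tm n) := by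
  have h : 4 * n + 4 - 4 * n = 4 := by omega
  simp only [seg, h, List.range']
  simp only [List.map_cons, List.map_nil, B]
  rw [tm4_0, tm4_1, tm4_2, tm4_3]

lemma W_four (N : ℕ) : W (4 * N) = Phi (W N) := by
  induction N with
  | zero => simp [W, Phi]
  | succ n ih =>
    have h1 : W (4 * (n + 1)) = W (4 * n) ++ seg (4 * n) (4 * n + 4) := by
      rw [show 4 * (n + 1) = 4 * n + 4 by ring]
      exact W_append (by omega)
    have h3 : W (n + 1) = W n ++ [tm n] := by
      rw [W_append (Nat.le_succ n), seg_singleton]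
    rw [h1, h3, seg_four, ih]
    unfold Phi
    rw [List.flatMap_append]
    simp

lemma pplTM_4N1 (N : ℕ) : pplTM (4 * N + 1) ≤ pplTM N + 1 := by
  obtain ⟨ps, hd, hl⟩ := palLen_spec (W N)
  have hdec : IsPalDecomp (W (4 * N + 1)) (ps.map Phi ++ [[tm (4 * N)]]) := by
    constructor
    · rw [List.flatten_append, Phi_flatten, hd.1, ← W_four]
      rw [W_append (show 4 * N ≤ 4 * N + 1 by omega), seg_singleton]
      simp
    · intro p hmem
      rcases List.mem_append.mp hmem with h1 | h1
      · simp only [List.mem_map] at h1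
        obtain ⟨q, hq, rfl⟩ := h1
        exact ⟨Phi_ne_nil (hd.2 q hq).1, Phi_palindrome (hd.2 q hq).2⟩
      · simp only [List.mem_singleton] at h1
        subst h1
        exact ⟨by simp, List.Palindrome.singleton _⟩
  have h2 := palLen_le hdec
  simp only [List.length_append, List.length_map, List.length_singleton] at h2
  rw [pplTM_def, pplTM_def, ← hl]
  exact h2

noncomputable def G (k : ℕ) : ℕ :=
  if k % 4 = 0 then pplTM (k / 4)
  else if k % 4 = 1 then pplTM (k / 4) + 1
  else if k % 4 = 2 then min (pplTM (k / 4)) (pplTM (k / 4 + 1)) + 2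
  else min (pplTM (k / 4) + 2) (pplTM (k / 4 + 1) + 1)

lemma G_0 (n : ℕ) : G (4 * n) = pplTM n := by
  have h1 : 4 * n % 4 = 0 := by omega
  have h2 : 4 * n / 4 = n := by omega
  simp [G, h1, h2]

lemma G_1 (n : ℕ) : G (4 * n + 1) = pplTM n + 1 := by
  have h1 : (4 * n + 1) % 4 = 1 := by omega
  have h2 : (4 * n + 1) / 4 = n := by omega
  simp [G, h1, h2]

lemma G_2 (n : ℕ) : G (4 * n + 2) = min (pplTM n) (pplTM (n + 1)) + 2 := by
  have h1 : (4 * n + 2) % 4 = 2 := by omega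
  have h2 : (4 * n + 2) / 4 = n := by omega
  simp [G, h1, h2]

lemma G_3 (n : ℕ) : G (4 * n + 3) = min (pplTM n + 2) (pplTM (n + 1) + 1) := by
  have h1 : (4 * n + 3) % 4 = 3 := by omega
  have h2 : (4 * n + 3) / 4 = n := by omega
  simp [G, h1, h2]

/-- arithmetic step for a final palindrome of length 1 -/
lemma G_step1 {k : ℕ} (hk : 1 ≤ k) : G k ≤ G (k - 1) + 1 := by
  have h4 : k % 4 = 0 ∨ k % 4 = 1 ∨ k % 4 = 2 ∨ k % 4 = 3 := by omega
  rcases h4 with h | h | h | h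
  · -- k = 4(m+1), k-1 = 4m+3
    obtain ⟨m, rfl⟩ : ∃ m, k = 4 * m + 4 := ⟨k / 4 - 1, by omega⟩
    rw [show 4 * m + 4 - 1 = 4 * m + 3 by omega, G_3, show 4 * m + 4 = 4 * (m + 1) by ring, G_0]
    have := pplTM_succ_le m
    omega
  · obtain ⟨m, rfl⟩ : ∃ m, k = 4 * m + 1 := ⟨k / 4, by omega⟩
    rw [show 4 * m + 1 - 1 = 4 * m by omega, G_0, G_1]
  · obtain ⟨m, rfl⟩ : ∃ m, k = 4 * m + 2 := ⟨k / 4, by omega⟩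
    rw [show 4 * m + 2 - 1 = 4 * m + 1 by omega, G_1, G_2]
    omega
  · obtain ⟨m, rfl⟩ : ∃ m, k = 4 * m + 3 := ⟨k / 4, by omega⟩
    rw [show 4 * m + 3 - 1 = 4 * m + 2 by omega, G_2, G_3]
    have := pplTM_succ_le m
    omega

/-- arithmetic step for a final palindrome of length 3 (residue 3 excluded) -/
lemma G_step3 {k : ℕ} (hk : 3 ≤ k) (hr : k % 4 ≠ 3) : G k ≤ G (k - 3) + 1 := by
  have h4 : k % 4 = 0 ∨ k % 4 = 1 ∨ k % 4 = 2 := by omega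
  rcases h4 with h | h | h
  · obtain ⟨m, rfl⟩ : ∃ m, k = 4 * m + 4 := ⟨k / 4 - 1, by omega⟩
    rw [show 4 * m + 4 - 3 = 4 * m + 1 by omega, G_1, show 4 * m + 4 = 4 * (m + 1) by ring, G_0]
    have := pplTM_succ_le m
    omega
  · obtain ⟨m, rfl⟩ : ∃ m, k = 4 * m + 5 := ⟨k / 4 - 1, by omega⟩
    rw [show 4 * m + 5 - 3 = 4 * m + 2 by omega, G_2, show 4 * m + 5 = 4 * (m + 1) + 1 by ring, G_1]
    have := pplTM_succ_le m
    omega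
  · obtain ⟨m, rfl⟩ : ∃ m, k = 4 * m + 6 := ⟨k / 4 - 1, by omega⟩
    rw [show 4 * m + 6 - 3 = 4 * m + 3 by omega, G_3,
        show 4 * m + 6 = 4 * (m + 1) + 2 by ring, G_2]
    have := pplTM_succ_le m
    have := pplTM_succ_le (m + 1)
    omega

theorem main_lb : ∀ k ps, IsPalDecomp (W k) ps → G k ≤ ps.length := by
  intro k
  induction k using Nat.strong_induction_on with
  | _ k IH =>
  intro ps hdec
  rcases Nat.eq_zero_or_pos k with rfl | hk
  · rw [show G 0 = pplTM 0 by simp [G], pplTM_zero]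
    exact Nat.zero_le _
  rcases List.eq_nil_or_concat ps with rfl | ⟨qs, p, rfl⟩
  · exfalso
    have h1 := congrArg List.length hdec.1
    rw [W_length] at h1
    simp at h1
    omega
  have hflat : qs.flatten ++ p = W k := by
    have := hdec.1
    rwa [List.concat_eq_append, List.flatten_append, List.flatten_cons, List.flatten_nil,
      List.append_nil] at this
  have hpmem := hdec.2 p (by rw [List.concat_eq_append]; exact List.mem_append_right _ (by simp))
  have hpne : p ≠ [] := hpmem.1
  have hppal : p.Palindrome := hpmem.2
  have hℓpos : 1 ≤ p.length := List.length_pos_iff.mpr hpne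
  have hlenk : qs.flatten.length + p.length = k := by
    have := congrArg List.length hflat
    rw [W_length] at this
    simpa using this
  set ℓ := p.length with hℓdef
  set j := k - ℓ with hjdef
  have hjk : j < k := by omega
  have hjlen : qs.flatten.length = j := by omega
  have heq := List.append_inj (hflat.trans (W_append (show j ≤ k by omega)))
    (by rw [hjlen, W_length])
  have hqdec : IsPalDecomp (W j) qs :=
    ⟨heq.1, fun q hq => hdec.2 q (by rw [List.concat_eq_append]; exact List.mem_append_left _ hq)⟩
  have IHj := IH j hjk qs hqdec
  have hpt : ∀ i, j + i < k → tm (j + i) = tm (k - 1 - i) := by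
    have := heq.2 ▸ hppal
    exact ptwise_of_pal this
  rw [List.concat_eq_append, List.length_append, List.length_singleton]
  -- now goal : G k ≤ qs.length + 1
  rcases Nat.even_or_odd ℓ with ⟨u, hu⟩ | ⟨u, hu⟩
  · -- even length
    have hu1 : 1 ≤ u := by omega
    obtain ⟨u', rfl⟩ : ∃ u', u = u' + 1 := ⟨u - 1, by omega⟩
    have hcen : tm (j + u') = tm (j + u' + 1) := by
      have h := hpt u' (by omega)
      rwa [show k - 1 - u' = j + u' + 1 by omega] at h
    have hmod2 := tm_adj hcen
    have hmod : (j + k) % 4 = 0 := by omega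
    have h4 : k % 4 = 0 ∨ k % 4 = 1 ∨ k % 4 = 2 ∨ k % 4 = 3 := by omega
    rcases h4 with h | h | h | h
    · -- k = 4n, j = 4a
      obtain ⟨n, hkn⟩ : ∃ n, k = 4 * n := ⟨k / 4, by omega⟩
      obtain ⟨a, hja⟩ : ∃ a, j = 4 * a := ⟨j / 4, by omega⟩
      have han : a < n := by omega
      have hv : (seg a n).Palindrome := by
        apply pal_of_ptwise
        intro i hi
        calc tm (a + i) = tm (4 * (a + i)) := (tm4_0 _).symm
          _ = tm (j + 4 * i) := by congr 1 <;> omega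
          _ = tm (k - 1 - 4 * i) := hpt (4 * i) (by omega)
          _ = tm (4 * (n - 1 - i) + 3) := by congr 1 <;> omega
          _ = tm (n - 1 - i) := tm4_3 _
      have hU := pplTM_append_pal (show a ≤ n by omega) hv
      rw [hja, G_0] at IHj
      rw [hkn, G_0]
      omega
    · -- k = 4n+1, j = 4a+3
      obtain ⟨n, hkn⟩ : ∃ n, k = 4 * n + 1 := ⟨k / 4, by omega⟩
      obtain ⟨a, hja⟩ : ∃ a, j = 4 * a + 3 := ⟨j / 4, by omega⟩
      have han : a + 1 ≤ n := by omega
      have hv' : (seg a (n + 1)).Palindrome := by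
        apply pal_of_ptwise
        intro i hi
        rcases i with _ | i'
        · have h0 := hpt 0 (by omega)
          rw [show j + 0 = 4 * a + 3 by omega, show k - 1 - 0 = 4 * n by omega,
            tm4_3, tm4_0] at h0
          rw [show a + 0 = a by omega, show n + 1 - 1 - 0 = n by omega]
          exact h0
        · calc tm (a + (i' + 1)) = tm (4 * (a + i' + 1)) := (tm4_0 _).symm
            _ = tm (j + (4 * i' + 1)) := by congr 1 <;> omega
            _ = tm (k - 1 - (4 * i' + 1)) := hpt _ (by omega)
            _ = tm (4 * (n - i' - 1) + 3) := by congr 1 <;> omega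
            _ = tm (n - i' - 1) := tm4_3 _
            _ = tm (n + 1 - 1 - (i' + 1)) := by congr 1 <;> omega
      have hv : (seg (a + 1) n).Palindrome := by
        apply pal_of_ptwise
        intro i hi
        have h := ptwise_of_pal hv' (i + 1) (by omega)
        rw [show a + (i + 1) = a + 1 + i by omega] at h
        rwa [show n + 1 - 1 - (i + 1) = n - 1 - i by omega] at h
      have hU1 := pplTM_append_pal (show a ≤ n + 1 by omega) hv'
      have hU2 := pplTM_append_pal (show a + 1 ≤ n by omega) hv
      have hL := pplTM_le_succ n
      rw [hja, G_3] at IHj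
      rw [hkn, G_1]
      omega
    · -- k = 4n+2, j = 4a+2
      obtain ⟨n, hkn⟩ : ∃ n, k = 4 * n + 2 := ⟨k / 4, by omega⟩
      obtain ⟨a, hja⟩ : ∃ a, j = 4 * a + 2 := ⟨j / 4, by omega⟩
      have han : a < n := by omega
      have hv' : (seg a (n + 1)).Palindrome := by
        apply pal_of_ptwise
        intro i hi
        rcases i with _ | i'
        · have h0 := hpt 0 (by omega)
          rw [show j + 0 = 4 * a + 2 by omega, show k - 1 - 0 = 4 * n + 1 by omega,
            tm4_2, tm4_1] at h0
          rw [show a + 0 = a by omega, show n + 1 - 1 - 0 = n by omega]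
          have := tm_le_one a; have := tm_le_one n
          omega
        · calc tm (a + (i' + 1)) = tm (4 * (a + i' + 1)) := (tm4_0 _).symm
            _ = tm (j + (4 * i' + 2)) := by congr 1 <;> omega
            _ = tm (k - 1 - (4 * i' + 2)) := hpt _ (by omega)
            _ = tm (4 * (n - i' - 1) + 3) := by congr 1 <;> omega
            _ = tm (n - i' - 1) := tm4_3 _
            _ = tm (n + 1 - 1 - (i' + 1)) := by congr 1 <;> omega
      have hv : (seg (a + 1) n).Palindrome := by
        apply pal_of_ptwise
        intro i hi
        have h := ptwise_of_pal hv' (i + 1) (by omega)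
        rw [show a + (i + 1) = a + 1 + i by omega] at h
        rwa [show n + 1 - 1 - (i + 1) = n - 1 - i by omega] at h
      have hU1 := pplTM_append_pal (show a ≤ n + 1 by omega) hv'
      have hU2 := pplTM_append_pal (show a + 1 ≤ n by omega) hv
      rw [hja, G_2] at IHj
      rw [hkn, G_2]
      omega
    · -- k = 4n+3, j = 4a+1
      obtain ⟨n, hkn⟩ : ∃ n, k = 4 * n + 3 := ⟨k / 4, by omega⟩
      obtain ⟨a, hja⟩ : ∃ a, j = 4 * a + 1 := ⟨j / 4, by omega⟩
      have han : a ≤ n := by omega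
      have hv' : (seg a (n + 1)).Palindrome := by
        apply pal_of_ptwise
        intro i hi
        rcases i with _ | i'
        · have h0 := hpt 0 (by omega)
          rw [show j + 0 = 4 * a + 1 by omega, show k - 1 - 0 = 4 * n + 2 by omega,
            tm4_1, tm4_2] at h0
          rw [show a + 0 = a by omega, show n + 1 - 1 - 0 = n by omega]
          have := tm_le_one a; have := tm_le_one n
          omega
        · calc tm (a + (i' + 1)) = tm (4 * (a + i' + 1)) := (tm4_0 _).symm
            _ = tm (j + (4 * i' + 3)) := by congr 1 <;> omega
            _ = tm (k - 1 - (4 * i' + 3)) := hpt _ (by omega)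
            _ = tm (4 * (n - i' - 1) + 3) := by congr 1 <;> omega
            _ = tm (n - i' - 1) := tm4_3 _
            _ = tm (n + 1 - 1 - (i' + 1)) := by congr 1 <;> omega
      have hU1 := pplTM_append_pal (show a ≤ n + 1 by omega) hv'
      rw [hja, G_1] at IHj
      rw [hkn, G_3]
      omega
  · -- odd length
    rcases Nat.lt_or_ge u 2 with hu2 | hu2
    · interval_cases u
      · -- ℓ = 1
        have := G_step1 (show 1 ≤ k by omega)
        rw [show k - 1 = j by omega] at this
        omega
      · -- ℓ = 3
        rcases Nat.decEq (k % 4) 3 with h3 | h3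
        case isTrue =>
          -- contradiction: j = 4n, k-1 = 4n+2
          exfalso
          obtain ⟨n, hkn⟩ : ∃ n, k = 4 * n + 3 := ⟨k / 4, by omega⟩
          have h0 := hpt 0 (by omega)
          rw [show j + 0 = 4 * n by omega, show k - 1 - 0 = 4 * n + 2 by omega,
            tm4_0, tm4_2] at h0
          have := tm_le_one n
          omega
        case isFalse =>
          have := G_step3 (show 3 ≤ k by omega) h3
          rw [show k - 3 = j by omega] at this
          omega
    · -- ℓ odd ≥ 5 : impossible
      exfalso
      obtain ⟨u'', rfl⟩ : ∃ v, u = v + 2 := ⟨u - 2, by omega⟩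
      have e1 := hpt (u'' + 1) (by omega)
      have e2 := hpt u'' (by omega)
      rw [show k - 1 - (u'' + 1) = j + u'' + 3 by omega,
        show j + (u'' + 1) = j + u'' + 1 by omega] at e1
      rw [show k - 1 - u'' = j + u'' + 4 by omega] at e2
      exact tm_no_center (j + u'') e1 e2

/-- No optimal palindromic decomposition of the prefix of the Thue–Morse word
of length `4N + 1` ends with a palindrome of length 3. -/
theorem pplTM_4N1_no_length_three_end (N : ℕ) (ps : List (List ℕ))
    (hdec : IsPalDecomp ((List.range (4 * N + 1)).map tm) ps)
    (hopt : ps.length = pplTM (4 * N + 1)) :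
    ∀ p, ps.getLast? = some p → p.length ≠ 3 := by
  intro p hlast hlen3
  rcases List.eq_nil_or_concat ps with rfl | ⟨qs, p', rfl⟩
  · simp at hlast
  have hp' : p' = p := by
    simp [List.concat_eq_append] at hlast
    exact hlast
  subst hp'
  have hflat : qs.flatten ++ p' = W (4 * N + 1) := by
    have := hdec.1
    rwa [List.concat_eq_append, List.flatten_append, List.flatten_cons, List.flatten_nil,
      List.append_nil] at this
  have hlen : qs.flatten.length + 3 = 4 * N + 1 := by
    have := congrArg List.length hflat
    rw [W_length] at this
    simpa [hlen3] using this
  obtain ⟨M, rfl⟩ : ∃ M, N = M + 1 := ⟨N - 1, by omega⟩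
  have heq := List.append_inj (hflat.trans (W_append (show 4 * M + 2 ≤ 4 * (M + 1) + 1 by omega)))
    (by rw [W_length]; omega)
  have hqdec : IsPalDecomp (W (4 * M + 2)) qs :=
    ⟨heq.1, fun q hq => hdec.2 q (by rw [List.concat_eq_append]; exact List.mem_append_left _ hq)⟩
  have hmain := main_lb (4 * M + 2) qs hqdec
  rw [G_2] at hmain
  have hub := pplTM_4N1 (M + 1)
  have hlip := pplTM_succ_le M
  have hlen_ps : (qs.concat p').length = qs.length + 1 := by simp
  rw [hlen_ps] at hopt
  omega
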